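/- Thistlethwaite theorem for the arrow bracket of virtual knotoids (combinatorial core): let K be a virtual knotoid diagram with crossing set C, and fix a state s assigning to each crossing an A- or B-smoothing. For each state s' (function C → {A,B}), let F(s') ⊆ C be the set of crossings where s' differs from s, let p_a(s'), p_b(s') be the numbers of A- and B-smoothings in s', and let e_+(F), e_−(F) denote the numbers of positive and negative edges (i.e. crossings smoothed as A resp. B in s) in a subset F. Then with b_e = B/A for positive e and b_e = A/B for negative e: A^{e_+(C)} B^{e_−(C)} · Π_{e∈F(s')} b_e = A^{p_a(s')} B^{p_b(s')}. Consequently, summing over states with matching boundary weights, ⟨K⟩ = (A^{e_+} B^{e_−} / d) · R_{G_K^s}(1, b, d). -/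

import Mathlib

open Finset

/-- Thistlethwaite theorem for the arrow bracket of virtual
knotoids (combinatorial core). `C` is the crossing set; states are functions
`C → Bool` (`true` = A-smoothing); `s` is the fixed reference state, which signs
the crossings (`e` positive iff `s e = true`). A state `s'` corresponds to the
subgraph `F(s') = {e | s' e ≠ s e}` of the marked ribbon graph `G_K^s`; `cnt s'`
is the number of state components of `s'`, `arc s'` its arc-component variable,
and `bc`, `Wt` the boundary-component count and boundary-weight monomial of
subgraphs of `G_K^s`, which match those of the corresponding states (`hbc`,
`hW`). With edge weights `b_e = B/A` for positive `e` and `b_e = A/B` for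
negative `e`: first, the weight identity
`A^{e₊(C)} B^{e₋(C)} · Π_{e ∈ F(s')} b_e = A^{p_a(s')} B^{p_b(s')}`; consequently
`⟨K⟩ = (A^{e₊} B^{e₋} / d) · R_{G_K^s}(1, b, d)`. -/
theorem thistlethwaite_virtual_knotoid
    {C : Type*} [Fintype C] [DecidableEq C]
    {K : Type*} [Field K] (A B d : K) (hA : A ≠ 0) (hB : B ≠ 0) (hd : d ≠ 0)
    (s : C → Bool)
    (cnt : (C → Bool) → ℕ) (hcnt : ∀ s', 1 ≤ cnt s')
    (arc : (C → Bool) → K)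
    (bc : Finset C → ℕ) (Wt : Finset C → K)
    (hbc : ∀ s' : C → Bool, bc (Finset.univ.filter fun e => s' e ≠ s e) = cnt s')
    (hW : ∀ s' : C → Bool, Wt (Finset.univ.filter fun e => s' e ≠ s e) = arc s') :
    (∀ s' : C → Bool,
      A ^ (Finset.univ.filter fun e => s e = true).card
        * B ^ (Finset.univ.filter fun e => s e = false).card
        * ∏ e ∈ Finset.univ.filter (fun e => s' e ≠ s e),
            (if s e then B / A else A / B)
      = A ^ (Finset.univ.filter fun e => s' e = true).card
        * B ^ (Finset.univ.filter fun e => s' e = false).card)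
    ∧
    (∑ s' : C → Bool,
        A ^ (Finset.univ.filter fun e => s' e = true).card
          * B ^ (Finset.univ.filter fun e => s' e = false).card
          * d ^ (cnt s' - 1) * arc s')
      = A ^ (Finset.univ.filter fun e => s e = true).card
          * B ^ (Finset.univ.filter fun e => s e = false).card / d
        * ∑ F : Finset C,
            (∏ e ∈ F, (if s e then B / A else A / B)) * d ^ bc F * Wt F := by
  classical
  have L : ∀ t : C → Bool,
      A ^ (Finset.univ.filter fun e => t e = true).card
        * B ^ (Finset.univ.filter fun e => t e = false).card
      = ∏ e : C, (if t e then A else B) := by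
    intro t
    rw [Finset.prod_ite, Finset.prod_const, Finset.prod_const]
    congr 2
    simp [Bool.not_eq_true]
  have key : ∀ s' : C → Bool,
      A ^ (Finset.univ.filter fun e => s e = true).card
        * B ^ (Finset.univ.filter fun e => s e = false).card
        * ∏ e ∈ Finset.univ.filter (fun e => s' e ≠ s e),
            (if s e then B / A else A / B)
      = A ^ (Finset.univ.filter fun e => s' e = true).card
        * B ^ (Finset.univ.filter fun e => s' e = false).card := by
    intro s'
    rw [L s, L s', Finset.prod_filter, ← Finset.prod_mul_distrib]
    refine Finset.prod_congr rfl fun e _ => ?_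
    cases hs : s e <;> cases hs' : s' e <;>
      simp [hs, hs'] <;> field_simp
  refine ⟨key, ?_⟩
  let ε : (C → Bool) ≃ Finset C :=
    { toFun := fun s' => Finset.univ.filter fun e => s' e ≠ s e
      invFun := fun F => fun e => xor (decide (e ∈ F)) (s e)
      left_inv := by
        intro s'
        funext e
        by_cases h : s' e = s e <;> simp [h] <;>
          cases hs : s e <;> simp [hs] at h ⊢ <;> simp [h]
      right_inv := by
        intro F
        ext e
        by_cases h : e ∈ F <;> cases hs : s e <;> simp [h, hs] }
  have hsum : (∑ F : Finset C,
      (∏ e ∈ F, (if s e then B / A else A / B)) * d ^ bc F * Wt F)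
      = ∑ s' : C → Bool,
        (∏ e ∈ Finset.univ.filter (fun e => s' e ≠ s e),
            (if s e then B / A else A / B))
          * d ^ bc (Finset.univ.filter fun e => s' e ≠ s e)
          * Wt (Finset.univ.filter fun e => s' e ≠ s e) := by
    exact (Equiv.sum_comp ε (fun F =>
      (∏ e ∈ F, (if s e then B / A else A / B)) * d ^ bc F * Wt F)).symm
  rw [hsum, Finset.mul_sum]
  refine Finset.sum_congr rfl fun s' _ => ?_
  rw [hbc s', hW s']
  rw [show cnt s' = (cnt s' - 1) + 1 from (Nat.succ_pred_eq_of_pos (hcnt s')).symm,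
    pow_succ]
  simp only [Nat.add_sub_cancel]
  rw [← key s']
  field_simp
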